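/- Fix a number field K and set ν := (√5 − 1)·e^{√5}/2. For x ≥ 3 let a(x) := (√5−1)π√x/(2n_K) + 21.3270 + 33.3542/n_K, let w(x) ≥ 0 be the unique real with w(x)·e^{w(x)} = (e^{√5}/(2π))·δ_K·a(x), let T(x) := 8.2822 + a(x)/w(x), let ε_K(x) := max(0, d_K·log x − 3.6133·n_K·√x/T(x)), and let B(x) := (√x/π)·[(½·log²(e^{w(x)+1} + 33.5251·δ_K) − ½·log²δ_K + 3.9792·log δ_K − 3.4969)·n_K + 25.5362] + 1.0155·log Δ_K − 2.1042·n_K + 8.8590 + ε_K(x). Then as x → +∞, B(x) = n_K·(√x/(2π))·[ ¼·log²x − log x·log log x + (log δ_K + log(eν/n_K))·log x + (log log x)² − 2·(log δ_K + log(ν/n_K))·log log x + (2·log(ν/n_K) + 7.9584)·log δ_K + log²(ν/n_K) − 5.9938 ] + 25.5362·√x/π + o(√x). -/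

import Mathlib

open Filter Topology NumberField

section AuxLemmas
open Filter Topology Asymptotics


lemma aux_log_taylor {t : ℝ} (h : |t| ≤ 1/2) : |Real.log (1+t) - t| ≤ 2*t^2 := by
  have h1 : |(-t : ℝ)| < 1 := by rw [abs_neg]; linarith [abs_nonneg t]
  have h2 : |(-t) + Real.log (1 - (-t))| ≤ |(-t)|^2 / (1 - |(-t)|) := by
    simpa [Finset.sum_range_succ] using Real.abs_log_sub_add_sum_range_le h1 1
  rw [abs_neg] at h2
  have h3 : (1:ℝ) - |t| ≥ 1/2 := by linarith
  have hsq : |t|^2 = t^2 := sq_abs t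
  have h4 : |t|^2 / (1 - |t|) ≤ 2 * t^2 := by
    rw [div_le_iff₀ (by linarith)]
    nlinarith [sq_nonneg t]
  calc |Real.log (1+t) - t| = |(-t) + Real.log (1 - (-t))| := by ring_nf
      _ ≤ |t|^2 / (1-|t|) := h2
      _ ≤ 2*t^2 := h4

lemma aux_log_abs {t : ℝ} (h : |t| ≤ 1/2) : |Real.log (1+t)| ≤ 2*|t| := by
  have h1 := aux_log_taylor h
  have h2 : |Real.log (1+t)| ≤ |t| + 2*t^2 := by
    calc |Real.log (1+t)| = |(Real.log (1+t) - t) + t| := by ring_nf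
      _ ≤ |Real.log (1+t) - t| + |t| := abs_add_le _ _
      _ ≤ |t| + 2*t^2 := by linarith
  have h3 : 2*t^2 ≤ |t| := by nlinarith [sq_abs t, abs_nonneg t]
  linarith

lemma aux_tendsto_log_sq_div : Tendsto (fun y : ℝ => (Real.log y)^2 / y) atTop (𝓝 0) := by
  have h : Tendsto (fun y : ℝ => Real.log y / Real.sqrt y) atTop (𝓝 0) := by
    have := (isLittleO_log_rpow_atTop (r := 1/2) (by norm_num)).tendsto_div_nhds_zero
    refine this.congr' ?_
    filter_upwards [eventually_ge_atTop (0:ℝ)] with y hy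
    rw [Real.sqrt_eq_rpow]
  have h2 : Tendsto (fun y : ℝ => (Real.log y / Real.sqrt y) * (Real.log y / Real.sqrt y)) atTop (𝓝 0) := by
    simpa using h.mul h
  refine (h2.congr' ?_)
  filter_upwards [eventually_gt_atTop (0:ℝ)] with y hy
  rw [div_mul_div_comm, Real.mul_self_sqrt hy.le, sq]

lemma aux_tendsto_log_div_sqrt : Tendsto (fun y : ℝ => Real.log y / Real.sqrt y) atTop (𝓝 0) := by
  have := (isLittleO_log_rpow_atTop (r := 1/2) (by norm_num)).tendsto_div_nhds_zero
  refine this.congr' ?_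
  filter_upwards [eventually_ge_atTop (0:ℝ)] with y hy
  rw [Real.sqrt_eq_rpow]

lemma aux_log_isLittleO_sqrt : Real.log =o[atTop] Real.sqrt := by
  refine (isLittleO_log_rpow_atTop (r := 1/2) (by norm_num)).congr' (by rfl) ?_
  filter_upwards [eventually_ge_atTop (0:ℝ)] with y hy
  rw [Real.sqrt_eq_rpow]

lemma aux_tendsto_add_one_mul_exp_neg : Tendsto (fun t : ℝ => (t+1)*Real.exp (-t)) atTop (𝓝 0) := by
  have h1 := Real.tendsto_pow_mul_exp_neg_atTop_nhds_zero 1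
  have h2 := Real.tendsto_pow_mul_exp_neg_atTop_nhds_zero 0
  have h3 : Tendsto (fun x : ℝ => x^1 * Real.exp (-x) + x^0 * Real.exp (-x)) atTop (𝓝 0) := by
    simpa using h1.add h2
  exact h3.congr (fun t => by ring)

lemma aux_tendsto_log_div : Tendsto (fun y : ℝ => Real.log y / y) atTop (𝓝 0) := by
  have := Real.isLittleO_log_id_atTop.tendsto_div_nhds_zero
  simpa using this

lemma aux_w_tendsto (L w : ℝ → ℝ) (hL : Tendsto L atTop atTop)
    (hw0 : ∀ᶠ x in atTop, 0 ≤ w x)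
    (hwe : ∀ᶠ x in atTop, w x * Real.exp (w x) = L x) :
    Tendsto w atTop atTop := by
  rw [tendsto_atTop]
  intro b
  set M := max b 0 + 1 with hM
  filter_upwards [hw0, hwe, hL.eventually_ge_atTop (M * Real.exp M)] with x h0 he hLx
  rcases le_or_gt M (w x) with h | h
  · have : b ≤ M := by have := le_max_left b (0:ℝ); simp only [hM]; linarith
    linarith
  · exfalso
    have e1 : Real.exp (w x) ≤ Real.exp M := Real.exp_le_exp.mpr h.le
    have e2 : 0 < Real.exp (w x) := Real.exp_pos _
    have h1 : w x * Real.exp (w x) < M * Real.exp M := by nlinarith [Real.exp_pos M]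
    rw [he] at h1; linarith

lemma aux_lambert (L w : ℝ → ℝ) (hL : Tendsto L atTop atTop)
    (hw0 : ∀ᶠ x in atTop, 0 ≤ w x)
    (hwe : ∀ᶠ x in atTop, w x * Real.exp (w x) = L x) :
    Tendsto (fun x => (w x + 1)^2 -
      ((Real.log (L x) + 1 - Real.log (Real.log (L x)))^2 + 2 * Real.log (Real.log (L x))))
      atTop (𝓝 0) := by
  have hwt := aux_w_tendsto L w hL hw0 hwe
  have hlt : Tendsto (fun x => Real.log (L x)) atTop atTop := Real.tendsto_log_atTop.comp hL
  have hg : Tendsto (fun x => 12 * ((Real.log (Real.log (L x)))^2 / Real.log (L x)))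
      atTop (𝓝 0) := by
    simpa using (aux_tendsto_log_sq_div.comp hlt).const_mul (12:ℝ)
  apply squeeze_zero_norm' _ hg
  have hld : ∀ᶠ x in atTop, Real.log (Real.log (L x)) / Real.log (L x) ≤ 1/2 :=
    (aux_tendsto_log_div.comp hlt).eventually_le_const (by norm_num : (0:ℝ) < 1/2)
  filter_upwards [hwe, hwt.eventually_ge_atTop 1, hlt.eventually_ge_atTop 2, hld,
    hL.eventually_gt_atTop 0] with x he hw1 hl2 hld2 hL0
  set ℓ := Real.log (L x) with hℓdef
  set s := Real.log (w x) with hs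
  set g := Real.log ℓ with hgdef
  have hwx0 : (0:ℝ) < w x := by linarith
  have hexp1 : (1:ℝ) ≤ Real.exp (w x) := Real.one_le_exp (by linarith)
  have hwL : Real.exp (w x) ≤ L x := by rw [← he]; nlinarith
  have hwle : w x ≤ ℓ := by
    calc w x = Real.log (Real.exp (w x)) := (Real.log_exp _).symm
      _ ≤ ℓ := Real.log_le_log (Real.exp_pos _) hwL
  have hadd : s + w x = ℓ := by
    have h1 : Real.log (w x * Real.exp (w x)) = s + w x := by
      rw [Real.log_mul (ne_of_gt hwx0) (Real.exp_ne_zero _), Real.log_exp]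
    rw [← h1, he]
  have hs0 : 0 ≤ s := Real.log_nonneg hw1
  have hl0 : (0:ℝ) < ℓ := by linarith
  have hsl : s ≤ g := Real.log_le_log hwx0 hwle
  have hg0 : 0 ≤ g := Real.log_nonneg (by linarith)
  set u := s / ℓ with hu
  have hu0 : 0 ≤ u := div_nonneg hs0 hl0.le
  have huleg : u ≤ g / ℓ := by
    rw [hu]; exact (div_le_div_iff_of_pos_right hl0).mpr hsl
  have hu2 : u ≤ 1/2 := le_trans huleg hld2
  have habs_u : |(-u)| ≤ 1/2 := by rw [abs_neg, abs_of_nonneg hu0]; exact hu2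
  have hσdef : s - g = Real.log (1 + (-u)) := by
    have hwd : w x / ℓ = 1 + (-u) := by
      have hwxe : w x = ℓ - s := by linarith
      rw [hwxe, hu]; field_simp; ring
    rw [hgdef, ← Real.log_div (ne_of_gt hwx0) (ne_of_gt hl0), hwd]
  have hσ1 : |s - g| ≤ 2*u := by
    rw [hσdef]
    have := aux_log_abs habs_u
    rwa [abs_neg, abs_of_nonneg hu0] at this
  have hσu : |(s - g) + u| ≤ 2*u^2 := by
    have h1 := aux_log_taylor habs_u
    rw [hσdef]
    have h2 : Real.log (1 + -u) + u = Real.log (1 + -u) - (-u) := by ring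
    rw [h2]
    calc |Real.log (1 + -u) - (-u)| ≤ 2*(-u)^2 := h1
      _ = 2*u^2 := by ring
  have hℓu : ℓ * u = s := by rw [hu]; field_simp
  have hD : (w x + 1)^2 - ((ℓ + 1 - g)^2 + 2*g)
      = -2*ℓ*((s - g) + u) + 2*g*(s - g) + (s - g)^2 := by
    have hwxe : w x = ℓ - s := by linarith
    rw [hwxe]; linear_combination (2:ℝ) * hℓu
  rw [Real.norm_eq_abs, hD]
  have htri : |(-2*ℓ*((s - g) + u) + 2*g*(s - g) + (s - g)^2)|
      ≤ 2*ℓ*(2*u^2) + 2*g*(2*u) + (2*u)^2 := by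
    have h1 : |(-2*ℓ*((s - g) + u))| ≤ 2*ℓ*(2*u^2) := by
      rw [abs_mul]
      have : |(-2*ℓ)| = 2*ℓ := by rw [abs_of_nonpos (by linarith)]; ring
      rw [this]
      exact mul_le_mul_of_nonneg_left hσu (by linarith)
    have h2 : |2*g*(s - g)| ≤ 2*g*(2*u) := by
      rw [abs_mul]
      have : |(2*g)| = 2*g := abs_of_nonneg (by linarith)
      rw [this]
      exact mul_le_mul_of_nonneg_left hσ1 (by linarith)
    have h3 : |(s - g)^2| ≤ (2*u)^2 := by
      rw [abs_of_nonneg (sq_nonneg _)]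
      exact sq_le_sq' (by linarith [abs_le.mp hσ1]) (by linarith [abs_le.mp hσ1])
    calc |(-2*ℓ*((s - g) + u) + 2*g*(s - g) + (s - g)^2)|
        ≤ |(-2*ℓ*((s - g) + u) + 2*g*(s - g))| + |(s - g)^2| := abs_add_le _ _
      _ ≤ |(-2*ℓ*((s - g) + u))| + |2*g*(s - g)| + |(s - g)^2| := by
          linarith [abs_add_le (-2*ℓ*((s - g) + u)) (2*g*(s - g))]
      _ ≤ 2*ℓ*(2*u^2) + 2*g*(2*u) + (2*u)^2 := by linarith
  refine htri.trans ?_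
  -- 4ℓu² + 4gu + 4u² ≤ 12 g²/ℓ
  have e1 : 2*ℓ*(2*u^2) ≤ 4*(g^2/ℓ) := by
    have h1 : ℓ * u^2 = s * u := by rw [← hℓu]; ring
    have h2 : s * u ≤ g * (g/ℓ) := mul_le_mul hsl huleg hu0 hg0
    have h3 : g*(g/ℓ) = g^2/ℓ := by ring
    have h4 : 2*ℓ*(2*u^2) = 4*(ℓ*u^2) := by ring
    rw [h4, h1]; linarith [h2.trans_eq h3]
  have e2 : 2*g*(2*u) ≤ 4*(g^2/ℓ) := by
    have h4 : u ≤ g/ℓ := huleg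
    have : g * u ≤ g * (g/ℓ) := mul_le_mul_of_nonneg_left h4 hg0
    have hgg : g * (g/ℓ) = g^2/ℓ := by ring
    linarith [this.trans_eq hgg]
  have e3 : (2*u)^2 ≤ 4*(g^2/ℓ) := by
    have h5 : u^2 ≤ (g/ℓ)^2 := pow_le_pow_left₀ hu0 huleg 2
    have h6 : (g/ℓ)^2 ≤ g^2/ℓ := by
      have h7 : (g/ℓ)^2 = g^2/ℓ^2 := by rw [div_pow]
      have h8 : g^2/ℓ^2 ≤ g^2/ℓ :=
        div_le_div_of_nonneg_left (sq_nonneg g) hl0 (by nlinarith)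
      linarith [h7 ▸ h8]
    have h9 : (2*u)^2 = 4*u^2 := by ring
    rw [h9]; linarith
  have : (12:ℝ)*(g^2/ℓ) = 4*(g^2/ℓ) + 4*(g^2/ℓ) + 4*(g^2/ℓ) := by ring
  rw [this]; linarith

lemma aux_sqrt_tendsto : Tendsto Real.sqrt atTop atTop := by
  refine (tendsto_rpow_atTop (by norm_num : (0:ℝ) < 1/2)).congr' ?_
  filter_upwards [eventually_ge_atTop (0:ℝ)] with y hy
  rw [Real.sqrt_eq_rpow]

set_option maxHeartbeats 800000 in
lemma aux_QP (C K0 : ℝ) (hC : 0 < C) (hK0 : 0 < K0) :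
    Tendsto (fun x : ℝ =>
      ((Real.log (C * Real.sqrt x + K0) + 1 - Real.log (Real.log (C * Real.sqrt x + K0)))^2
          + 2 * Real.log (Real.log (C * Real.sqrt x + K0)))
        - ((Real.log x / 2 - Real.log (Real.log x) + (Real.log 2 + Real.log C) + 1)^2
            + 2 * Real.log (Real.log x) - 2 * (Real.log 2 + Real.log C)))
      atTop (𝓝 0) := by
  set c0 := Real.log C with hc0
  set ρ : ℝ → ℝ := fun x => Real.log (1 + K0/(C*Real.sqrt x)) with hρdef
  set t : ℝ → ℝ := fun x => 2*(c0 + ρ x)/Real.log x with htdef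
  set φ : ℝ → ℝ := fun x => ρ x - Real.log (1 + t x) with hφdef
  have hsqinv : Tendsto (fun x : ℝ => (Real.sqrt x)⁻¹) atTop (𝓝 0) :=
    aux_sqrt_tendsto.inv_tendsto_atTop
  have hlx : Tendsto Real.log atTop atTop := Real.tendsto_log_atTop
  have hρb : ∀ᶠ x : ℝ in atTop, 0 ≤ ρ x ∧ ρ x ≤ K0/C * (Real.sqrt x)⁻¹ := by
    filter_upwards [eventually_gt_atTop (0:ℝ)] with x hx
    have hsx : 0 < Real.sqrt x := Real.sqrt_pos.mpr hx
    have hv : 0 < K0/(C*Real.sqrt x) := by positivity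
    constructor
    · exact Real.log_nonneg (by linarith)
    · have h1 : Real.log (1 + K0/(C*Real.sqrt x)) ≤ (1 + K0/(C*Real.sqrt x)) - 1 :=
        Real.log_le_sub_one_of_pos (by linarith)
      have h2 : (1 + K0/(C*Real.sqrt x)) - 1 = K0/C * (Real.sqrt x)⁻¹ := by
        field_simp; ring
      simp only [hρdef]; rw [h2] at h1; exact h1
  have hρ0 : Tendsto ρ atTop (𝓝 0) := by
    apply squeeze_zero' (hρb.mono fun x h => h.1) (hρb.mono fun x h => h.2)
    simpa using hsqinv.const_mul (K0/C)
  have hlρ : Tendsto (fun x => Real.log x * ρ x) atTop (𝓝 0) := by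
    apply squeeze_zero' ?_ ?_ (show Tendsto (fun x : ℝ => K0/C * (Real.log x / Real.sqrt x))
      atTop (𝓝 0) by simpa using aux_tendsto_log_div_sqrt.const_mul (K0/C))
    · filter_upwards [hρb, hlx.eventually_ge_atTop 0] with x h1 h2
      exact mul_nonneg h2 h1.1
    · filter_upwards [hρb, hlx.eventually_ge_atTop 0, eventually_gt_atTop (0:ℝ)] with x h1 h2 hx
      have hsx : 0 < Real.sqrt x := Real.sqrt_pos.mpr hx
      have h3 := mul_le_mul_of_nonneg_left h1.2 h2
      calc Real.log x * ρ x ≤ Real.log x * (K0/C * (Real.sqrt x)⁻¹) := h3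
        _ = K0/C * (Real.log x / Real.sqrt x) := by field_simp
  have ht0 : Tendsto t atTop (𝓝 0) := by
    have h1 : Tendsto (fun x => 2*(c0 + ρ x)) atTop (𝓝 (2*(c0+0))) :=
      (tendsto_const_nhds.add hρ0).const_mul 2
    have h2 : Tendsto (fun x : ℝ => (Real.log x)⁻¹) atTop (𝓝 0) := hlx.inv_tendsto_atTop
    have h3 := h1.mul h2
    simp only [mul_zero] at h3
    refine h3.congr fun x => ?_
    simp only [htdef]; rw [div_eq_mul_inv]
  have hlog1t : Tendsto (fun x => Real.log (1 + t x)) atTop (𝓝 0) := by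
    have h1 : Tendsto (fun x => 1 + t x) atTop (𝓝 1) := by
      simpa using tendsto_const_nhds.add ht0
    have h2 := (Real.continuousAt_log (by norm_num : (1:ℝ) ≠ 0)).tendsto.comp h1
    rw [Real.log_one] at h2; exact h2
  have hφ : Tendsto φ atTop (𝓝 0) := by
    have h1 := hρ0.sub hlog1t
    simpa using h1
  have htb : ∀ᶠ x : ℝ in atTop, |t x| ≤ 4*(|c0|+1)/Real.log x := by
    filter_upwards [hρb, hρ0.eventually_le_const (by norm_num : (0:ℝ) < 1),
      hlx.eventually_ge_atTop 1] with x h1 h2 h3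
    have hlx0 : (0:ℝ) < Real.log x := by linarith
    have h4 : |t x| = |2*(c0 + ρ x)| / Real.log x := by
      simp only [htdef]
      rw [abs_div, abs_of_pos hlx0]
    rw [h4]
    have h5 : |2*(c0 + ρ x)| ≤ 4*(|c0|+1) := by
      have h8 := abs_add_le c0 (ρ x)
      rw [abs_mul]
      have h6 : |ρ x| = ρ x := abs_of_nonneg h1.1
      have h7 : |(2:ℝ)| = 2 := by norm_num
      rw [h7]
      nlinarith [abs_nonneg c0]
    gcongr
  have ht12 : ∀ᶠ x : ℝ in atTop, |t x| ≤ 1/2 := by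
    have h1 := ht0.abs
    rw [abs_zero] at h1
    exact h1.eventually_le_const (by norm_num : (0:ℝ) < 1/2)
  -- lx * φ → -2c0
  have hlogt2 : Tendsto (fun x => Real.log x * (Real.log (1 + t x) - t x)) atTop (𝓝 0) := by
    apply squeeze_zero_norm' ?_ (show Tendsto (fun x : ℝ => (4*(|c0|+1))^2 * (2 / Real.log x))
      atTop (𝓝 0) by simpa [div_eq_mul_inv] using (hlx.inv_tendsto_atTop.const_mul (2:ℝ)).const_mul ((4*(|c0|+1))^2))
    filter_upwards [ht12, htb, hlx.eventually_ge_atTop 1] with x h1 h2 h3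
    have hlx0 : (0:ℝ) < Real.log x := by linarith
    have h4 : |Real.log (1 + t x) - t x| ≤ 2*(t x)^2 := aux_log_taylor h1
    have h5 : (t x)^2 ≤ (4*(|c0|+1)/Real.log x)^2 := by
      rw [← sq_abs (t x)]
      exact pow_le_pow_left₀ (abs_nonneg _) h2 2
    have h6 : ‖Real.log x * (Real.log (1 + t x) - t x)‖ = Real.log x * |Real.log (1 + t x) - t x| := by
      rw [Real.norm_eq_abs, abs_mul, abs_of_pos hlx0]
    rw [h6]
    have h7 : Real.log x * |Real.log (1 + t x) - t x| ≤ Real.log x * (2*(4*(|c0|+1)/Real.log x)^2) := by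
      apply mul_le_mul_of_nonneg_left ?_ hlx0.le
      calc |Real.log (1 + t x) - t x| ≤ 2*(t x)^2 := h4
        _ ≤ 2*(4*(|c0|+1)/Real.log x)^2 := by linarith
    refine h7.trans (le_of_eq ?_)
    have h9 : (1:ℝ)/Real.log x ≤ 1 := by rw [div_le_one hlx0]; linarith
    have hq1 : Real.log x * (2*(4*(|c0|+1)/Real.log x)^2) * Real.log x
        = ((4*(|c0|+1))^2 * (2/Real.log x)) * Real.log x := by
      field_simp
    have hlxne : Real.log x ≠ 0 := ne_of_gt hlx0
    exact mul_right_cancel₀ hlxne hq1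
  have hlxφ : Tendsto (fun x => Real.log x * φ x) atTop (𝓝 (-(2*c0))) := by
    have hcomb : Tendsto (fun x => Real.log x * ρ x - Real.log x * (Real.log (1 + t x) - t x)
        - (2*c0 + 2*ρ x)) atTop (𝓝 (0 - 0 - (2*c0 + 2*0))) :=
      (hlρ.sub hlogt2).sub (tendsto_const_nhds.add (hρ0.const_mul 2))
    have heq : ∀ᶠ x : ℝ in atTop, Real.log x * ρ x - Real.log x * (Real.log (1 + t x) - t x)
        - (2*c0 + 2*ρ x) = Real.log x * φ x := by
      filter_upwards [hlx.eventually_ge_atTop 1] with x h3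
      have hlx0 : Real.log x ≠ 0 := by linarith
      have h4 : Real.log x * t x = 2*(c0 + ρ x) := by
        simp only [htdef]; field_simp
      simp only [hφdef]
      nlinarith [h4]
    have := hcomb.congr' heq
    simpa using this
  -- llx * φ → 0
  have hφb : ∀ᶠ x : ℝ in atTop, |φ x| ≤ ρ x + 8*(|c0|+1)/Real.log x := by
    filter_upwards [ht12, htb, hρb, hlx.eventually_ge_atTop 1] with x h1 h2 h3 h4
    have h5 : |Real.log (1 + t x)| ≤ 2*|t x| := aux_log_abs h1
    have h6 : |φ x| ≤ |ρ x| + |Real.log (1 + t x)| := by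
      simp only [hφdef]; exact abs_sub _ _
    rw [abs_of_nonneg h3.1] at h6
    have h7 : 2*|t x| ≤ 8*(|c0|+1)/Real.log x := by
      calc 2*|t x| ≤ 2*(4*(|c0|+1)/Real.log x) := by linarith
        _ = 8*(|c0|+1)/Real.log x := by ring
    linarith
  have hllxφ : Tendsto (fun x => Real.log (Real.log x) * φ x) atTop (𝓝 0) := by
    apply squeeze_zero_norm' ?_ (show Tendsto (fun x : ℝ =>
        Real.log x * ρ x + 8*(|c0|+1) * (Real.log (Real.log x) / Real.log x)) atTop (𝓝 0) by
      simpa using hlρ.add ((aux_tendsto_log_div.comp hlx).const_mul (8*(|c0|+1))))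
    filter_upwards [hφb, hρb, hlx.eventually_ge_atTop 3] with x h1 h2 h3
    have hlx0 : (0:ℝ) < Real.log x := by linarith
    have hllx0 : (0:ℝ) ≤ Real.log (Real.log x) := Real.log_nonneg (by linarith)
    have hllxle : Real.log (Real.log x) ≤ Real.log x := by
      have := Real.log_le_sub_one_of_pos hlx0
      linarith
    have h4 : ‖Real.log (Real.log x) * φ x‖ = Real.log (Real.log x) * |φ x| := by
      rw [Real.norm_eq_abs, abs_mul, abs_of_nonneg hllx0]
    rw [h4]
    have h5 : Real.log (Real.log x) * |φ x| ≤ Real.log (Real.log x) * (ρ x + 8*(|c0|+1)/Real.log x) :=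
      mul_le_mul_of_nonneg_left h1 hllx0
    refine h5.trans ?_
    have h6 : Real.log (Real.log x) * ρ x ≤ Real.log x * ρ x :=
      mul_le_mul_of_nonneg_right hllxle h2.1
    have h7 : Real.log (Real.log x) * (8*(|c0|+1)/Real.log x)
        = 8*(|c0|+1) * (Real.log (Real.log x) / Real.log x) := by ring
    nlinarith [h7]
  -- assemble
  have hΦ : Tendsto (fun x => Real.log x * φ x - 2*(Real.log (Real.log x) * φ x)
      + (2*(Real.log 2 + c0 + 1))*φ x + φ x * φ x + (2*c0 + 2*Real.log (1 + t x)))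
      atTop (𝓝 0) := by
    have h1 := (((hlxφ.sub (hllxφ.const_mul 2)).add (hφ.const_mul (2*(Real.log 2 + c0 + 1)))).add
      (hφ.mul hφ)).add ((show Tendsto (fun _ : ℝ => 2*c0) atTop (𝓝 (2*c0)) from
        tendsto_const_nhds).add (hlog1t.const_mul 2))
    have h2 : -(2*c0) - 2*0 + 2*(Real.log 2 + c0 + 1)*0 + 0*0 + (2*c0 + 2*0) = 0 := by ring
    rw [h2] at h1
    exact h1
  refine Tendsto.congr' ?_ hΦ
  filter_upwards [eventually_gt_atTop (1:ℝ), hρb, ht12,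
    hlx.eventually_ge_atTop (4*(|c0|+1)), hlx.eventually_ge_atTop 3] with x hx1 hρx ht12x hlx4 hlx3
  have hx0 : (0:ℝ) < x := by linarith
  have hsx : 0 < Real.sqrt x := Real.sqrt_pos.mpr hx0
  have hlx0 : (0:ℝ) < Real.log x := by linarith
  have hCs : 0 < C * Real.sqrt x := by positivity
  have hv : 0 < 1 + K0/(C*Real.sqrt x) := by positivity
  have id0 : C * Real.sqrt x + K0 = (C * Real.sqrt x) * (1 + K0/(C*Real.sqrt x)) := by
    field_simp
  have id1 : Real.log (C * Real.sqrt x + K0) = Real.log x / 2 + c0 + ρ x := by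
    rw [id0, Real.log_mul (ne_of_gt hCs) (ne_of_gt hv),
      Real.log_mul (ne_of_gt hC) (ne_of_gt hsx), Real.log_sqrt hx0.le]
    simp only [hρdef, hc0]; ring
  have h1t : 0 < 1 + t x := by
    have := abs_le.mp ht12x
    linarith [this.1]
  have id2 : Real.log x / 2 + c0 + ρ x = (Real.log x / 2) * (1 + t x) := by
    simp only [htdef]; field_simp; ring
  have id3 : Real.log (Real.log (C * Real.sqrt x + K0))
      = Real.log (Real.log x) - Real.log 2 + Real.log (1 + t x) := by
    rw [id1, id2, Real.log_mul (by positivity) (ne_of_gt h1t),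
      Real.log_div (ne_of_gt hlx0) (by norm_num : (2:ℝ) ≠ 0)]
  rw [id3, id1]
  simp only [hφdef]
  ring


end AuxLemmas

noncomputable section

/-- `n_K`, the degree of `K` over `ℚ`, as a real number. -/
def nK (K : Type*) [Field K] [NumberField K] : ℝ := (Module.finrank ℚ K : ℝ)

/-- `Δ_K`, the absolute value of the discriminant of `K`, as a real number. -/
def DeltaK (K : Type*) [Field K] [NumberField K] : ℝ := |(NumberField.discr K : ℝ)|

/-- `δ_K := Δ_K^{1/n_K}`, the root discriminant of `K`. -/
def deltaK (K : Type*) [Field K] [NumberField K] : ℝ := DeltaK K ^ (1 / nK K)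

/-- `d_K := r_1 + r_2 - 1`. -/
def dK (K : Type*) [Field K] [NumberField K] : ℝ :=
  (NumberField.InfinitePlace.nrRealPlaces K : ℝ)
    + (NumberField.InfinitePlace.nrComplexPlaces K : ℝ) - 1

set_option maxHeartbeats 2000000 in
open Asymptotics in
theorem statement_18
    (K : Type*) [Field K] [NumberField K]
    (ν : ℝ) (hν : ν = (Real.sqrt 5 - 1) * Real.exp (Real.sqrt 5) / 2)
    (a w T ε B : ℝ → ℝ)
    (ha : ∀ x : ℝ, 3 ≤ x → a x = (Real.sqrt 5 - 1) * Real.pi * Real.sqrt x / (2 * nK K)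
            + 21.3270 + 33.3542 / nK K)
    (hw0 : ∀ x : ℝ, 3 ≤ x → 0 ≤ w x)
    (hw : ∀ x : ℝ, 3 ≤ x →
            w x * Real.exp (w x) = Real.exp (Real.sqrt 5) / (2 * Real.pi) * (deltaK K * a x))
    (hT : ∀ x : ℝ, 3 ≤ x → T x = 8.2822 + a x / w x)
    (hε : ∀ x : ℝ, 3 ≤ x →
            ε x = max 0 (dK K * Real.log x - 3.6133 * nK K * Real.sqrt x / T x))
    (hB : ∀ x : ℝ, 3 ≤ x →
            B x = Real.sqrt x / Real.pi *
                ((1 / 2 * Real.log (Real.exp (w x + 1) + 33.5251 * deltaK K) ^ 2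
                    - 1 / 2 * Real.log (deltaK K) ^ 2
                    + 3.9792 * Real.log (deltaK K) - 3.4969) * nK K
                  + 25.5362)
              + 1.0155 * Real.log (DeltaK K) - 2.1042 * nK K + 8.8590 + ε x) :
    (fun x : ℝ => B x
        - (nK K * (Real.sqrt x / (2 * Real.pi)) *
            (1 / 4 * Real.log x ^ 2
              - Real.log x * Real.log (Real.log x)
              + (Real.log (deltaK K) + Real.log (Real.exp 1 * ν / nK K)) * Real.log x
              + Real.log (Real.log x) ^ 2
              - 2 * (Real.log (deltaK K) + Real.log (ν / nK K)) * Real.log (Real.log x)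
              + (2 * Real.log (ν / nK K) + 7.9584) * Real.log (deltaK K)
              + Real.log (ν / nK K) ^ 2
              - 5.9938)
          + 25.5362 * Real.sqrt x / Real.pi))
      =o[atTop] fun x : ℝ => Real.sqrt x := by
  have hπ := Real.pi_pos
  have hn1 : (1:ℝ) ≤ nK K := by
    have h := Module.finrank_pos (R := ℚ) (M := K)
    unfold nK; exact_mod_cast h
  have hn0 : (0:ℝ) < nK K := by linarith
  have hΔ1 : (1:ℝ) ≤ DeltaK K := by
    unfold DeltaK
    have h0 : NumberField.discr K ≠ 0 := NumberField.discr_ne_zero K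
    have h1 : (1:ℤ) ≤ |NumberField.discr K| := Int.one_le_abs h0
    have h2 : ((1:ℤ):ℝ) ≤ ((|NumberField.discr K| : ℤ) : ℝ) := by exact_mod_cast h1
    rw [Int.cast_abs] at h2
    simpa using h2
  have hδ1 : (1:ℝ) ≤ deltaK K := by
    unfold deltaK
    calc (1:ℝ) = (1:ℝ) ^ (1/nK K) := (Real.one_rpow _).symm
      _ ≤ DeltaK K ^ (1/nK K) := Real.rpow_le_rpow (by norm_num) hΔ1 (by positivity)
  have hδ0 : (0:ℝ) < deltaK K := by linarith
  have hs5 : 1 < Real.sqrt 5 := by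
    rw [show (1:ℝ) = Real.sqrt 1 from (Real.sqrt_one).symm]
    exact Real.sqrt_lt_sqrt (by norm_num) (by norm_num)
  have hν0 : 0 < ν := by
    rw [hν]
    have h1 := Real.exp_pos (Real.sqrt 5)
    nlinarith
  set n := nK K with hndef
  set δ := deltaK K with hδdef
  set C := δ * ν / (2*n) with hCdef
  set K0 := Real.exp (Real.sqrt 5)/(2*Real.pi)*(δ*(21.3270 + 33.3542/n)) with hK0def
  have hC : 0 < C := div_pos (mul_pos hδ0 hν0) (by linarith)
  have hK0 : 0 < K0 := by
    have h1 : (0:ℝ) < 33.3542/n := div_pos (by norm_num) hn0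
    have h2 : (0:ℝ) < 21.3270 + 33.3542/n := by norm_num; linarith
    exact mul_pos (div_pos (Real.exp_pos _) (by linarith)) (mul_pos hδ0 h2)
  have hLeq : ∀ x : ℝ, 3 ≤ x →
      Real.exp (Real.sqrt 5)/(2*Real.pi) * (δ * a x) = C * Real.sqrt x + K0 := by
    intro x hx
    rw [ha x hx, hCdef, hK0def, hν]
    field_simp
    ring
  have hsqt : Tendsto Real.sqrt atTop atTop := aux_sqrt_tendsto
  have hLt : Tendsto (fun x => C * Real.sqrt x + K0) atTop atTop :=
    tendsto_atTop_add_const_right atTop K0 (hsqt.const_mul_atTop hC)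
  have hw0' : ∀ᶠ x : ℝ in atTop, 0 ≤ w x := by
    filter_upwards [eventually_ge_atTop (3:ℝ)] with x hx; exact hw0 x hx
  have hwe : ∀ᶠ x : ℝ in atTop, w x * Real.exp (w x) = C * Real.sqrt x + K0 := by
    filter_upwards [eventually_ge_atTop (3:ℝ)] with x hx
    rw [hw x hx]; exact hLeq x hx
  have hwt : Tendsto w atTop atTop := aux_w_tendsto _ w hLt hw0' hwe
  have TA2 := aux_lambert _ w hLt hw0' hwe
  have TA3 := aux_QP C K0 hC hK0
  set E : ℝ → ℝ := fun x => Real.log (Real.exp (w x + 1) + 33.5251 * δ) with hEdef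
  have hcδ : (0:ℝ) < 33.5251 * δ := by nlinarith
  have TA1 : Tendsto (fun x => E x^2 - (w x + 1)^2) atTop (𝓝 0) := by
    have h1 := (aux_tendsto_add_one_mul_exp_neg.comp hwt).const_mul (2*(33.5251*δ))
    have h2 := (Real.tendsto_exp_neg_atTop_nhds_zero.comp hwt).const_mul ((33.5251*δ)^2)
    have hg : Tendsto (fun x => 2*(33.5251*δ) * ((w x + 1) * Real.exp (-(w x))) +
        (33.5251*δ)^2 * Real.exp (-(w x))) atTop (𝓝 0) := by
      have h3 := h1.add h2
      simp only [mul_zero, add_zero] at h3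
      exact h3.congr fun x => by simp [Function.comp]
    have hbd : ∀ᶠ x : ℝ in atTop, ‖E x^2 - (w x + 1)^2‖
        ≤ 2*(33.5251*δ) * ((w x + 1) * Real.exp (-(w x))) + (33.5251*δ)^2 * Real.exp (-(w x)) := by
      filter_upwards [hw0'] with x hx0
      have hpos : (0:ℝ) < 1 + 33.5251*δ * Real.exp (-(w x + 1)) := by positivity
      have hη : E x = (w x + 1) + Real.log (1 + 33.5251*δ * Real.exp (-(w x + 1))) := by
        simp only [hEdef]
        rw [show Real.exp (w x+1) + 33.5251*δ
            = Real.exp (w x+1) * (1 + 33.5251*δ*Real.exp (-(w x+1))) by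
          rw [Real.exp_neg]; field_simp]
        rw [Real.log_mul (Real.exp_ne_zero _) (ne_of_gt hpos), Real.log_exp]
      set η := Real.log (1 + 33.5251*δ*Real.exp (-(w x+1))) with hηdef
      have hη0 : 0 ≤ η := Real.log_nonneg (by nlinarith [Real.exp_pos (-(w x+1))])
      have hηb : η ≤ 33.5251*δ*Real.exp (-(w x+1)) := by
        have := Real.log_le_sub_one_of_pos hpos
        linarith
      have hee : Real.exp (-(w x+1)) ≤ Real.exp (-(w x)) :=
        Real.exp_le_exp.mpr (by linarith)
      have hesq : Real.exp (-(w x+1)) * Real.exp (-(w x+1)) ≤ Real.exp (-(w x)) := by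
        rw [← Real.exp_add]
        exact Real.exp_le_exp.mpr (by linarith)
      have hid : E x^2 - (w x+1)^2 = 2*(w x+1)*η + η^2 := by rw [hη]; ring
      rw [Real.norm_eq_abs, hid]
      have he1 : 2*(w x+1)*η ≤ 2*(33.5251*δ) * ((w x+1) * Real.exp (-(w x))) := by
        have hb1 : η ≤ 33.5251*δ*Real.exp (-(w x)) := le_trans hηb (by nlinarith)
        nlinarith [Real.exp_pos (-(w x))]
      have he2 : η^2 ≤ (33.5251*δ)^2 * Real.exp (-(w x)) := by
        have hb2 : η^2 ≤ (33.5251*δ*Real.exp (-(w x+1)))^2 := by nlinarith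
        have hb3 : (33.5251*δ*Real.exp (-(w x+1)))^2
            = (33.5251*δ)^2 * (Real.exp (-(w x+1)) * Real.exp (-(w x+1))) := by ring
        nlinarith
      have hnn : 0 ≤ 2*(w x+1)*η + η^2 := by nlinarith
      rw [abs_of_nonneg hnn]
      linarith
    exact squeeze_zero_norm' hbd hg
  set P : ℝ → ℝ := fun x => (Real.log x / 2 - Real.log (Real.log x)
      + (Real.log 2 + Real.log C) + 1)^2
      + 2*Real.log (Real.log x) - 2*(Real.log 2 + Real.log C) with hPdef
  have TG : Tendsto (fun x => E x^2 - P x) atTop (𝓝 0) := by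
    have h := (TA1.add TA2).add TA3
    simp only [add_zero] at h
    refine h.congr fun x => ?_
    simp only [hPdef]; ring
  -- bridge identities
  have hνn0 : (0:ℝ) < ν / n := div_pos hν0 hn0
  have hm : Real.log 2 + Real.log C = Real.log δ + Real.log (ν/n) := by
    have hC2 : C = δ*(ν/n)/2 := by rw [hCdef]; field_simp
    rw [hC2, Real.log_div (ne_of_gt (mul_pos hδ0 hνn0)) (by norm_num : (2:ℝ) ≠ 0),
      Real.log_mul (ne_of_gt hδ0) (ne_of_gt hνn0)]
    ring
  have he1 : Real.log (Real.exp 1 * ν / n) = 1 + Real.log (ν/n) := by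
    rw [mul_div_assoc, Real.log_mul (Real.exp_ne_zero 1) (ne_of_gt hνn0), Real.log_exp]
  have hFP : ∀ x : ℝ,
      (1 / 4 * Real.log x ^ 2
        - Real.log x * Real.log (Real.log x)
        + (Real.log δ + Real.log (Real.exp 1 * ν / n)) * Real.log x
        + Real.log (Real.log x) ^ 2
        - 2 * (Real.log δ + Real.log (ν / n)) * Real.log (Real.log x)
        + (2 * Real.log (ν / n) + 7.9584) * Real.log δ
        + Real.log (ν / n) ^ 2
        - 5.9938)
      = P x - Real.log δ^2 + 7.9584*Real.log δ - 6.9938 := by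
    intro x
    simp only [hPdef]
    rw [he1, hm]
    ring
  -- epsilon part
  have hεb : ∀ᶠ x : ℝ in atTop, ‖ε x‖ ≤ |dK K| * ‖Real.log x‖ := by
    filter_upwards [eventually_ge_atTop (3:ℝ)] with x hx
    have hx0 : (0:ℝ) < x := by linarith
    have hsx : 0 < Real.sqrt x := Real.sqrt_pos.mpr hx0
    have hlx0 : 0 ≤ Real.log x := Real.log_nonneg (by linarith)
    have hax : 0 < a x := by
      rw [ha x hx]
      have h1 : 0 ≤ (Real.sqrt 5 - 1) * Real.pi * Real.sqrt x / (2*n) := by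
        apply div_nonneg ?_ (by linarith)
        nlinarith [mul_nonneg (by linarith : (0:ℝ) ≤ Real.sqrt 5 - 1) (mul_pos hπ hsx).le]
      have h2 : (0:ℝ) < 33.3542/n := div_pos (by norm_num) hn0
      have h3 : (0:ℝ) < 21.3270 := by norm_num
      linarith
    have hwx : 0 < w x := by
      have h1 : 0 < w x * Real.exp (w x) := by
        rw [hw x hx]
        exact mul_pos (div_pos (Real.exp_pos _) (by linarith)) (mul_pos hδ0 hax)
      nlinarith [Real.exp_pos (w x), hw0 x hx]
    have hT0 : 0 < T x := by
      rw [hT x hx]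
      have h1 := div_pos hax hwx
      have h2 : (0:ℝ) < 8.2822 := by norm_num
      linarith
    have hq : 0 ≤ 3.6133 * n * Real.sqrt x / T x :=
      div_nonneg (mul_nonneg (mul_nonneg (by norm_num) hn0.le) hsx.le) hT0.le
    have hε0 : 0 ≤ ε x := by rw [hε x hx]; exact le_max_left _ _
    have hε1 : ε x ≤ |dK K| * Real.log x := by
      rw [hε x hx]
      apply max_le (mul_nonneg (abs_nonneg _) hlx0)
      have h1 : dK K * Real.log x ≤ |dK K| * Real.log x :=
        mul_le_mul_of_nonneg_right (le_abs_self _) hlx0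
      linarith
    rw [Real.norm_eq_abs, Real.norm_eq_abs, abs_of_nonneg hε0, abs_of_nonneg hlx0]
    exact hε1
  have hεo : ε =o[atTop] fun x : ℝ => Real.sqrt x :=
    (Asymptotics.isBigO_iff.mpr ⟨|dK K|, hεb⟩).trans_isLittleO aux_log_isLittleO_sqrt
  -- constant part
  have hco : (fun _ : ℝ => (1.0155 * Real.log (DeltaK K) - 2.1042*n + 8.8590 : ℝ))
      =o[atTop] fun x : ℝ => Real.sqrt x := by
    apply Asymptotics.isLittleO_const_left.mpr
    right
    have h1 : Tendsto (fun x : ℝ => |Real.sqrt x|) atTop atTop :=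
      tendsto_abs_atTop_atTop.comp hsqt
    refine h1.congr fun x => ?_
    simp [Real.norm_eq_abs]
  -- main part
  have hGo : (fun x => Real.sqrt x * (n/(2*Real.pi)) * (E x^2 - P x))
      =o[atTop] fun x : ℝ => Real.sqrt x := by
    rw [Asymptotics.isLittleO_iff]
    intro c hc
    have hT2 : Tendsto (fun x => |n/(2*Real.pi) * (E x^2 - P x)|) atTop (𝓝 0) := by
      have := (TG.const_mul (n/(2*Real.pi))).abs
      simpa using this
    filter_upwards [hT2.eventually_le_const hc] with x hx
    rw [Real.norm_eq_abs, Real.norm_eq_abs]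
    calc |Real.sqrt x * (n/(2*Real.pi)) * (E x^2 - P x)|
        = |n/(2*Real.pi) * (E x^2 - P x)| * |Real.sqrt x| := by
          rw [← abs_mul]; ring_nf
      _ ≤ c * |Real.sqrt x| := mul_le_mul_of_nonneg_right hx (abs_nonneg _)
  -- combine
  have hsum := (hGo.add hco).add hεo
  refine hsum.congr' ?_ (Filter.EventuallyEq.refl _ _)
  filter_upwards [eventually_ge_atTop (3:ℝ)] with x hx
  rw [hB x hx, hFP x]
  simp only [hEdef]
  ring
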